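/- Let T be a finite rooted tree with vertex set V, root r, and parent function p, and let a : V → ℝ with a ≥ 0. Then strong LP duality holds for the ℓ1-SBHSP problem: the infimum of ∑_{v ∈ V} |a_v − x_v| over all feasible assignments x equals the supremum of ∑_{v ∈ V} a_v β_v over all pairs (α, β) with α : V → ℝ, β : V → ℝ satisfying α_v ≥ 0 and −1 ≤ β_v ≤ 1 for all v, β_v + α_v − α_{p(v)} ≤ 0 for every v ≠ r, and β_r + α_r ≤ 0. -/

import Mathlib

open Finset
open scoped Classical

/-- A finite rooted tree: a distinguished root and a parent function under which
every vertex eventually reaches the root. -/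
structure SBHTree (V : Type*) [Fintype V] [DecidableEq V] where
  root : V
  parent : V → V
  parent_root : parent root = root
  reaches_root : ∀ v : V, ∃ n : ℕ, parent^[n] v = root

/-- The set of children of a vertex `v`. -/
def SBHTree.children {V : Type*} [Fintype V] [DecidableEq V]
    (T : SBHTree V) (v : V) : Finset V :=
  univ.filter (fun u => u ≠ T.root ∧ T.parent u = v)

/-- An assignment is feasible if it is non-negative and the value at each vertex is
at least the sum of the values at its children. -/
def SBHTree.Feasible {V : Type*} [Fintype V] [DecidableEq V]
    (T : SBHTree V) (x : V → ℝ) : Prop :=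
  (∀ v, 0 ≤ x v) ∧ ∀ v, (∑ u ∈ T.children v, x u) ≤ x v


/-- Dual feasibility for the ℓ1-SBHSP LP on a rooted tree: `α ≥ 0`,
`−1 ≤ β ≤ 1`, `β v + α v − α (p v) ≤ 0` for every non-root `v`, and
`β r + α r ≤ 0` at the root `r`. -/
def SBHTree.DualFeasible {V : Type*} [Fintype V] [DecidableEq V]
    (T : SBHTree V) (α β : V → ℝ) : Prop :=
  (∀ v, 0 ≤ α v) ∧ (∀ v, -1 ≤ β v ∧ β v ≤ 1) ∧
    (∀ v, v ≠ T.root → β v + α v - α (T.parent v) ≤ 0) ∧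
    β T.root + α T.root ≤ 0


open scoped Pointwise

namespace SBHTree

variable {V : Type*} [Fintype V] [DecidableEq V] (T : SBHTree V)

lemma iter_root (n : ℕ) : T.parent^[n] T.root = T.root :=
  Function.iterate_fixed T.parent_root n

lemma eq_root_of_iter_fixed {v : V} {m : ℕ} (h : T.parent^[m + 1] v = v) : v = T.root := by
  obtain ⟨n, hn⟩ := T.reaches_root v
  have key : ∀ k : ℕ, T.parent^[k * (m + 1)] v = v := by
    intro k
    induction k with
    | zero => simp
    | succ k ih =>
      rw [Nat.succ_mul, Function.iterate_add_apply, h, ih]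
  have h1 : n ≤ n * (m + 1) := Nat.le_mul_of_pos_right _ (Nat.succ_pos m)
  calc v = T.parent^[n * (m + 1)] v := (key n).symm
    _ = T.parent^[(n * (m + 1) - n) + n] v := by rw [Nat.sub_add_cancel h1]
    _ = T.parent^[n * (m + 1) - n] (T.parent^[n] v) := Function.iterate_add_apply _ _ _ _
    _ = T.root := by rw [hn, T.iter_root]

/-- ancestors of `u` (including `u` itself and the root). -/
noncomputable def anc (u : V) : Finset V := univ.filter (fun v => ∃ n, T.parent^[n] u = v)

/-- descendants of `v` (including `v` itself). -/
noncomputable def desc (v : V) : Finset V := univ.filter (fun u => ∃ n, T.parent^[n] u = v)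

lemma mem_anc {u v : V} : v ∈ T.anc u ↔ ∃ n, T.parent^[n] u = v := by simp [anc]

lemma mem_desc {u v : V} : u ∈ T.desc v ↔ ∃ n, T.parent^[n] u = v := by simp [desc]

lemma self_mem_anc (u : V) : u ∈ T.anc u := T.mem_anc.2 ⟨0, rfl⟩

lemma self_mem_desc (v : V) : v ∈ T.desc v := T.mem_desc.2 ⟨0, rfl⟩

lemma desc_subset_parent (v : V) : T.desc v ⊆ T.desc (T.parent v) := by
  intro u hu
  obtain ⟨n, hn⟩ := T.mem_desc.1 hu
  exact T.mem_desc.2 ⟨n + 1, by rw [Function.iterate_succ_apply', hn]⟩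

lemma anc_root : T.anc T.root = {T.root} := by
  ext w
  simp only [mem_anc, Finset.mem_singleton]
  constructor
  · rintro ⟨n, hn⟩; rw [T.iter_root] at hn; exact hn.symm
  · rintro rfl; exact ⟨0, rfl⟩

lemma not_mem_anc_parent {v : V} (hv : v ≠ T.root) : v ∉ T.anc (T.parent v) := by
  intro h
  obtain ⟨n, hn⟩ := T.mem_anc.1 h
  exact hv (T.eq_root_of_iter_fixed (m := n) (by rw [Function.iterate_succ_apply]; exact hn))

lemma anc_eq {v : V} (hv : v ≠ T.root) : T.anc v = insert v (T.anc (T.parent v)) := by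
  ext w
  simp only [mem_anc, Finset.mem_insert]
  constructor
  · rintro ⟨n, hn⟩
    match n, hn with
    | 0, hn => exact Or.inl hn.symm
    | (m+1), hn => exact Or.inr ⟨m, by rw [Function.iterate_succ_apply] at hn; exact hn⟩
  · rintro (rfl | ⟨m, hm⟩)
    · exact ⟨0, rfl⟩
    · exact ⟨m + 1, by rw [Function.iterate_succ_apply]; exact hm⟩

lemma mem_children {u v : V} : u ∈ T.children v ↔ u ≠ T.root ∧ T.parent u = v := by
  simp [children]

lemma anc_of_child_anc {u v c : V} (hc : c ∈ T.children v) (h : c ∈ T.anc u) :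
    v ∈ T.anc u := by
  obtain ⟨hcr, hcp⟩ := T.mem_children.1 hc
  obtain ⟨n, hn⟩ := T.mem_anc.1 h
  exact T.mem_anc.2 ⟨n + 1, by rw [Function.iterate_succ_apply', hn, hcp]⟩

lemma child_anc_unique_aux {u v c c' : V} (hc : c ∈ T.children v) (hc' : c' ∈ T.children v)
    {n m : ℕ} (hn : T.parent^[n] u = c) (hm : T.parent^[m] u = c') (hnm : n ≤ m) : c = c' := by
  obtain ⟨hcr, hcp⟩ := T.mem_children.1 hc
  obtain ⟨hcr', hcp'⟩ := T.mem_children.1 hc'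
  have h1 : T.parent^[m - n] c = c' := by
    rw [← hn, ← Function.iterate_add_apply, Nat.sub_add_cancel hnm, hm]
  match hmn : m - n, h1 with
  | 0, h1 => exact h1
  | (j+1), h1 =>
    rw [Function.iterate_succ_apply, hcp] at h1
    have hvr : v = T.root := T.eq_root_of_iter_fixed (m := j)
      (by rw [Function.iterate_succ_apply', h1, hcp'])
    rw [hvr, T.iter_root] at h1
    exact absurd h1.symm hcr'

lemma child_anc_unique {u v c c' : V} (hc : c ∈ T.children v) (hca : c ∈ T.anc u)
    (hc' : c' ∈ T.children v) (hca' : c' ∈ T.anc u) : c = c' := by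
  obtain ⟨n, hn⟩ := T.mem_anc.1 hca
  obtain ⟨m, hm⟩ := T.mem_anc.1 hca'
  rcases le_total n m with h | h
  · exact T.child_anc_unique_aux hc hc' hn hm h
  · exact (T.child_anc_unique_aux hc' hc hm hn h).symm

lemma indicator_feasible (u : V) :
    T.Feasible (fun v => if v ∈ T.anc u then (1:ℝ) else 0) := by
  constructor
  · intro v; dsimp only; split <;> norm_num
  · intro v
    have hsum : (∑ c ∈ T.children v, if c ∈ T.anc u then (1:ℝ) else 0)
        = ((T.children v).filter (fun c => c ∈ T.anc u)).card := by
      rw [← Finset.sum_filter, Finset.sum_const, nsmul_eq_mul, mul_one]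
    rw [hsum]
    rcases Finset.eq_empty_or_nonempty ((T.children v).filter (fun c => c ∈ T.anc u)) with he | hne
    · rw [he]
      simp only [Finset.card_empty, Nat.cast_zero]
      split <;> norm_num
    · obtain ⟨c, hc⟩ := hne
      obtain ⟨hc1, hc2⟩ := Finset.mem_filter.1 hc
      have hv : v ∈ T.anc u := T.anc_of_child_anc hc1 hc2
      have hcard : ((T.children v).filter (fun c => c ∈ T.anc u)).card ≤ 1 := by
        apply Finset.card_le_one.2
        intro x hx y hy
        obtain ⟨hx1, hx2⟩ := Finset.mem_filter.1 hx
        obtain ⟨hy1, hy2⟩ := Finset.mem_filter.1 hy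
        exact T.child_anc_unique hx1 hx2 hy1 hy2
      simp only [hv, if_true]
      exact_mod_cast hcard

/-- the sum of `β` along the path from the root to `u`. -/
noncomputable def pathSum (β : V → ℝ) (u : V) : ℝ := ∑ v ∈ T.anc u, β v

lemma pathSum_parent (β : V → ℝ) {v : V} (hv : v ≠ T.root) :
    T.pathSum β v = β v + T.pathSum β (T.parent v) := by
  rw [pathSum, pathSum, T.anc_eq hv, Finset.sum_insert (T.not_mem_anc_parent hv)]

lemma pathSum_root (β : V → ℝ) : T.pathSum β T.root = β T.root := by
  rw [pathSum, T.anc_root, Finset.sum_singleton]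

lemma dual_of_pathSum (β : V → ℝ) (hβ : ∀ v, -1 ≤ β v ∧ β v ≤ 1)
    (hB : ∀ u, T.pathSum β u ≤ 0) : ∃ α, T.DualFeasible α β := by
  refine ⟨fun v => (T.desc v).sup' ⟨v, T.self_mem_desc v⟩
      (fun u => T.pathSum β u - T.pathSum β v), ?_, hβ, ?_, ?_⟩
  · intro v
    have := Finset.le_sup' (fun u => T.pathSum β u - T.pathSum β v) (T.self_mem_desc v)
    simpa using this
  · intro v hv
    have hsup : (T.desc v).sup' ⟨v, T.self_mem_desc v⟩
        (fun u => T.pathSum β u - T.pathSum β v)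
        ≤ (T.desc (T.parent v)).sup' ⟨T.parent v, T.self_mem_desc _⟩
          (fun u => T.pathSum β u - T.pathSum β (T.parent v)) - β v := by
      apply Finset.sup'_le
      intro u hu
      have h1 : T.pathSum β u - T.pathSum β (T.parent v)
          ≤ (T.desc (T.parent v)).sup' ⟨T.parent v, T.self_mem_desc _⟩
            (fun u => T.pathSum β u - T.pathSum β (T.parent v)) :=
        Finset.le_sup' (fun u => T.pathSum β u - T.pathSum β (T.parent v))
          (T.desc_subset_parent v hu)
      have h2 := T.pathSum_parent β hv
      linarith
    linarith
  · have hsup : (T.desc T.root).sup' ⟨T.root, T.self_mem_desc _⟩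
        (fun u => T.pathSum β u - T.pathSum β T.root) ≤ - β T.root := by
      apply Finset.sup'_le
      intro u hu
      have h1 := hB u
      have h2 := T.pathSum_root β
      linarith
    linarith

lemma feasible_zero : T.Feasible (fun _ => (0:ℝ)) := by
  constructor
  · intro v; exact le_refl 0
  · intro v; simp

lemma feasible_smul {x : V → ℝ} (hx : T.Feasible x) {t : ℝ} (ht : 0 ≤ t) :
    T.Feasible (t • x) := by
  obtain ⟨h0, hc⟩ := hx
  constructor
  · intro v; exact mul_nonneg ht (h0 v)
  · intro v
    have : (∑ u ∈ T.children v, t * x u) = t * ∑ u ∈ T.children v, x u := by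
      rw [Finset.mul_sum]
    simp only [Pi.smul_apply, smul_eq_mul]
    rw [this]
    exact mul_le_mul_of_nonneg_left (hc v) ht

lemma feasible_convex : Convex ℝ {x : V → ℝ | T.Feasible x} := by
  rintro x ⟨hx0, hxc⟩ y ⟨hy0, hyc⟩ s t hs ht _
  constructor
  · intro v
    exact add_nonneg (mul_nonneg hs (hx0 v)) (mul_nonneg ht (hy0 v))
  · intro v
    have : (∑ u ∈ T.children v, (s • x + t • y) u)
        = s * (∑ u ∈ T.children v, x u) + t * ∑ u ∈ T.children v, y u := by
      simp only [Pi.add_apply, Pi.smul_apply, smul_eq_mul]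
      rw [Finset.sum_add_distrib, Finset.mul_sum, Finset.mul_sum]
    rw [this]
    exact add_le_add (mul_le_mul_of_nonneg_left (hxc v) hs)
      (mul_le_mul_of_nonneg_left (hyc v) ht)

lemma sum_parent_mul (g x : V → ℝ) :
    (∑ v ∈ univ.erase T.root, g (T.parent v) * x v)
      = ∑ w, g w * ∑ u ∈ T.children w, x u := by
  rw [← Finset.sum_fiberwise_of_maps_to (fun i _ => Finset.mem_univ (T.parent i))
    (fun v => g (T.parent v) * x v)]
  apply Finset.sum_congr rfl
  intro w _
  have hset : (univ.erase T.root).filter (fun v => T.parent v = w) = T.children w := by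
    rw [← Finset.filter_ne' univ T.root, Finset.filter_filter]
    rfl
  rw [hset, Finset.mul_sum]
  apply Finset.sum_congr rfl
  intro u hu
  rw [(T.mem_children.1 hu).2]

lemma weak_duality (a x α β : V → ℝ) (hx : T.Feasible x) (hd : T.DualFeasible α β) :
    (∑ v, a v * β v) ≤ ∑ v, |a v - x v| := by
  obtain ⟨hx0, hxc⟩ := hx
  obtain ⟨hα, hβ, hcon, hroot⟩ := hd
  have key : (∑ v, x v * β v) ≤ 0 := by
    have step1 : (∑ v ∈ univ.erase T.root, x v * β v)
        ≤ ∑ v ∈ univ.erase T.root, (α (T.parent v) * x v - α v * x v) := by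
      apply Finset.sum_le_sum
      intro v hv
      have hv' : v ≠ T.root := (Finset.mem_erase.1 hv).1
      have h1 := hcon v hv'
      nlinarith [hx0 v]
    have step2 : (∑ v ∈ univ.erase T.root, α (T.parent v) * x v)
        = ∑ w, α w * ∑ u ∈ T.children w, x u := T.sum_parent_mul α x
    have step3 : (∑ w, α w * ∑ u ∈ T.children w, x u) ≤ ∑ w, α w * x w := by
      apply Finset.sum_le_sum
      intro w _
      exact mul_le_mul_of_nonneg_left (hxc w) (hα w)
    have step4 : (∑ v ∈ univ.erase T.root, α v * x v)
        = (∑ w, α w * x w) - α T.root * x T.root := by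
      rw [← Finset.add_sum_erase univ (fun w => α w * x w) (Finset.mem_univ T.root)]
      ring
    have step5 : (∑ v, x v * β v)
        = x T.root * β T.root + ∑ v ∈ univ.erase T.root, x v * β v := by
      rw [Finset.add_sum_erase univ (fun v => x v * β v) (Finset.mem_univ T.root)]
    have hroot' : x T.root * β T.root ≤ - (α T.root * x T.root) := by
      nlinarith [hx0 T.root]
    have hsub : (∑ v ∈ univ.erase T.root, (α (T.parent v) * x v - α v * x v))
        = (∑ v ∈ univ.erase T.root, α (T.parent v) * x v)
          - ∑ v ∈ univ.erase T.root, α v * x v := by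
      rw [Finset.sum_sub_distrib]
    rw [step5]
    rw [hsub, step2, step4] at step1
    linarith
  have expand : (∑ v, a v * β v) = (∑ v, (a v - x v) * β v) + ∑ v, x v * β v := by
    rw [← Finset.sum_add_distrib]
    apply Finset.sum_congr rfl
    intro v _
    ring
  have bnd : (∑ v, (a v - x v) * β v) ≤ ∑ v, |a v - x v| := by
    apply Finset.sum_le_sum
    intro v _
    calc (a v - x v) * β v ≤ |(a v - x v) * β v| := le_abs_self _
      _ = |a v - x v| * |β v| := abs_mul _ _
      _ ≤ |a v - x v| * 1 := by
        apply mul_le_mul_of_nonneg_left _ (abs_nonneg _)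
        exact abs_le.2 (hβ v)
      _ = |a v - x v| := mul_one _
  linarith

end SBHTree

/-- Strong LP duality for the ℓ1-SBHSP problem on a finite
rooted tree with non-negative targets: the infimum of `∑ v, |a v − x v|` over
feasible assignments `x` equals the supremum of `∑ v, a v * β v` over
dual-feasible pairs `(α, β)`. -/
theorem stmt_12 {V : Type*} [Fintype V] [DecidableEq V] (T : SBHTree V)
    (a : V → ℝ) (ha : ∀ v, 0 ≤ a v) :
    sInf {c : ℝ | ∃ x : V → ℝ, T.Feasible x ∧ (∑ v, |a v - x v|) = c}
      = sSup {c : ℝ | ∃ α β : V → ℝ, T.DualFeasible α β ∧ (∑ v, a v * β v) = c} := by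
  set S : Set ℝ := {c : ℝ | ∃ x : V → ℝ, T.Feasible x ∧ (∑ v, |a v - x v|) = c} with hSdef
  set D : Set ℝ := {c : ℝ | ∃ α β : V → ℝ, T.DualFeasible α β ∧ (∑ v, a v * β v) = c}
    with hDdef
  have hS0 : (∑ v, |a v - (fun _ => (0:ℝ)) v|) ∈ S := ⟨fun _ => 0, T.feasible_zero, rfl⟩
  have hSne : S.Nonempty := ⟨_, hS0⟩
  have hdual0 : T.DualFeasible (fun _ => 0) (fun _ => 0) :=
    ⟨fun _ => le_refl 0, fun _ => ⟨by norm_num, by norm_num⟩, fun v _ => by simp, by simp⟩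
  have hD0 : (0 : ℝ) ∈ D := ⟨fun _ => 0, fun _ => 0, hdual0, by simp⟩
  have hDne : D.Nonempty := ⟨0, hD0⟩
  have hSnonneg : ∀ c ∈ S, 0 ≤ c := by
    rintro c ⟨x, hx, rfl⟩
    exact Finset.sum_nonneg fun v _ => abs_nonneg _
  have hbddS : BddBelow S := ⟨0, fun c hc => hSnonneg c hc⟩
  have hweakSD : ∀ d ∈ D, ∀ c ∈ S, d ≤ c := by
    rintro d ⟨α, β, hαβ, rfl⟩ c ⟨x, hx, rfl⟩
    exact T.weak_duality a x α β hx hαβ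
  have hbddD : BddAbove D := ⟨_, fun d hd => hweakSD d hd _ hS0⟩
  have hPnn : 0 ≤ sInf S := le_csInf hSne hSnonneg
  have hstrong : ∃ d ∈ D, sInf S ≤ d := by
    rcases hPnn.eq_or_lt with hP0 | hP
    · exact ⟨0, hD0, hP0.ge⟩
    · -- the separation argument
      set P := sInf S with hPdef
      set K : Set (V → ℝ) := {x | T.Feasible x} with hKdef
      set L : Set (V → ℝ) := {z | (∑ v, |z v|) < P} with hLdef
      have hLopen : IsOpen L := by
        have hcont : Continuous fun z : V → ℝ => ∑ v, |z v| :=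
          continuous_finset_sum _ fun v _ => (continuous_apply v).abs
        exact isOpen_lt hcont continuous_const
      have hLconv : Convex ℝ L := by
        rintro z hz w hw s t hs ht hst
        have h1 : (∑ v, |(s • z + t • w) v|) ≤ s * (∑ v, |z v|) + t * ∑ v, |w v| := by
          rw [Finset.mul_sum, Finset.mul_sum, ← Finset.sum_add_distrib]
          apply Finset.sum_le_sum
          intro v _
          simp only [Pi.add_apply, Pi.smul_apply, smul_eq_mul]
          calc |s * z v + t * w v| ≤ |s * z v| + |t * w v| := abs_add_le _ _
            _ = s * |z v| + t * |w v| := by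
              rw [abs_mul, abs_mul, abs_of_nonneg hs, abs_of_nonneg ht]
        have hzP : (∑ v, |z v|) < P := hz
        have hwP : (∑ v, |w v|) < P := hw
        show (∑ v, |(s • z + t • w) v|) < P
        have hfact : s * P + t * P = P := by rw [← add_mul, hst, one_mul]
        rcases hs.eq_or_lt with hs0 | hs0
        · have ht1 : t = 1 := by linarith
          have h2 : t * (∑ v, |w v|) < t * P := by rw [ht1, one_mul, one_mul]; exact hwP
          have h3 : s * (∑ v, |z v|) = 0 := by rw [← hs0, zero_mul]
          have h4 : s * P = 0 := by rw [← hs0, zero_mul]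
          linarith
        · have h2 : s * (∑ v, |z v|) < s * P := mul_lt_mul_of_pos_left hzP hs0
          have h3 : t * (∑ v, |w v|) ≤ t * P := mul_le_mul_of_nonneg_left hwP.le ht
          linarith
      have hKconv : Convex ℝ K := T.feasible_convex
      have hCopen : IsOpen (K + L) := hLopen.add_left
      have hCconv : Convex ℝ (K + L) := hKconv.add hLconv
      have haC : a ∉ K + L := by
        rintro ⟨x, hx, z, hz, hxz⟩
        have hz' : (∑ v, |z v|) < P := hz
        have hmem : (∑ v, |a v - x v|) ∈ S := ⟨x, hx, rfl⟩
        have h1 : (∑ v, |a v - x v|) = ∑ v, |z v| := by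
          apply Finset.sum_congr rfl
          intro v _
          have h3 : x v + z v = a v := by
            have := congrFun hxz v
            simpa using this
          have h4 : a v - x v = z v := by linarith
          rw [h4]
        have h2 : P ≤ ∑ v, |a v - x v| := csInf_le hbddS hmem
        linarith
      obtain ⟨f, hf⟩ := geometric_hahn_banach_open_point hCconv hCopen haC
      have h0K : (0 : V → ℝ) ∈ K := T.feasible_zero
      have h0L : (0 : V → ℝ) ∈ L := by
        show (∑ v, |(0 : V → ℝ) v|) < P
        simpa using hP
      have hKC : ∀ x ∈ K, f x < f a := by
        intro x hx
        have := hf (x + 0) (Set.add_mem_add hx h0L)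
        simpa using this
      have hfL : ∀ z ∈ L, f z < f a := by
        intro z hz
        have := hf ((0 : V → ℝ) + z) (Set.add_mem_add h0K hz)
        simpa using this
      have hfa : 0 < f a := by
        have := hKC 0 h0K
        simpa using this
      have hfK : ∀ x ∈ K, f x ≤ 0 := by
        intro x hx
        by_contra hpos
        push_neg at hpos
        have hxt : ((f a) / (f x)) • x ∈ K :=
          T.feasible_smul hx (le_of_lt (div_pos hfa hpos))
        have h1 := hKC _ hxt
        rw [map_smul, smul_eq_mul, div_mul_cancel₀ _ (ne_of_gt hpos)] at h1
        exact lt_irrefl _ h1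
      set β₀ : V → ℝ := fun v => f (Pi.single v 1) with hβ₀def
      have hrepr : ∀ z : V → ℝ, f z = ∑ v, z v * β₀ v := by
        intro z
        have hz : z = ∑ v, z v • (Pi.single v (1:ℝ) : V → ℝ) := by
          funext u
          rw [Finset.sum_apply]
          simp [Pi.single_apply]
        conv_lhs => rw [hz]
        rw [map_sum]
        apply Finset.sum_congr rfl
        intro v _
        rw [map_smul, smul_eq_mul]
      have hsingle : ∀ (v : V) (s : ℝ), f (Pi.single v s) = s * β₀ v := by
        intro v s
        rw [hrepr (Pi.single v s)]
        rw [Finset.sum_eq_single v]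
        · rw [Pi.single_eq_same]
        · intro w _ hw
          rw [Pi.single_eq_of_ne hw, zero_mul]
        · intro h
          exact absurd (Finset.mem_univ v) h
      have hsingleL : ∀ (v : V) (s : ℝ), |s| < P → s * β₀ v < f a := by
        intro v s hs
        have hmem : (Pi.single v s : V → ℝ) ∈ L := by
          show (∑ u, |(Pi.single v s : V → ℝ) u|) < P
          have heq : (∑ u, |(Pi.single v s : V → ℝ) u|) = |s| := by
            rw [Finset.sum_eq_single v]
            · rw [Pi.single_eq_same]
            · intro w _ hw
              rw [Pi.single_eq_of_ne hw, abs_zero]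
            · intro h
              exact absurd (Finset.mem_univ v) h
          rw [heq]; exact hs
        have := hfL _ hmem
        rwa [hsingle] at this
      have hbound : ∀ v, P * |β₀ v| ≤ f a := by
        intro v
        by_contra hcon
        push_neg at hcon
        have hq : 0 < |β₀ v| := by
          rcases (abs_nonneg (β₀ v)).eq_or_lt with h | h
          · rw [← h, mul_zero] at hcon; linarith
          · exact h
        have hq1 : f a / |β₀ v| < P := (div_lt_iff₀ hq).2 (by linarith [mul_comm P (|β₀ v|)])
        have hq0 : 0 < f a / |β₀ v| := div_pos hfa hq
        set t : ℝ := (f a / |β₀ v| + P) / 2 with hts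
        have ht1 : f a / |β₀ v| < t := by rw [hts]; linarith
        have ht2 : t < P := by rw [hts]; linarith
        have ht0 : 0 < t := by linarith
        set s : ℝ := if 0 ≤ β₀ v then t else -t with hss
        have habs : |s| = t := by
          rw [hss]; split_ifs
          · exact abs_of_pos ht0
          · rw [abs_neg]; exact abs_of_pos ht0
        have hsb : s * β₀ v = t * |β₀ v| := by
          rw [hss]
          split_ifs with h
          · rw [abs_of_nonneg h]
          · rw [abs_of_neg (lt_of_not_ge h)]; ring
        have hlt := hsingleL v s (by rw [habs]; exact ht2)
        rw [hsb] at hlt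
        have hgt : f a < t * |β₀ v| := (div_lt_iff₀ hq).1 ht1
        linarith
      obtain ⟨v₀, -, hv₀⟩ := Finset.exists_max_image (univ : Finset V)
        (fun v => |β₀ v|) ⟨T.root, Finset.mem_univ _⟩
      set M : ℝ := |β₀ v₀| with hMdef
      have hMnn : 0 ≤ M := abs_nonneg _
      have hMpos : 0 < M := by
        rcases hMnn.eq_or_lt with h | h
        · exfalso
          have hz : ∀ v, β₀ v = 0 := fun v =>
            abs_eq_zero.1 (le_antisymm ((hv₀ v (Finset.mem_univ v)).trans h.ge) (abs_nonneg _))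
          have hfa0 : f a = 0 := by
            rw [hrepr]
            apply Finset.sum_eq_zero
            intro v _
            rw [hz v, mul_zero]
          linarith
        · exact h
      set β : V → ℝ := fun v => β₀ v / M with hβdef
      have hβ1 : ∀ v, -1 ≤ β v ∧ β v ≤ 1 := by
        intro v
        have h1 : |β v| ≤ 1 := by
          rw [hβdef]
          simp only
          rw [abs_div, abs_of_pos hMpos]
          exact (div_le_one hMpos).2 (hv₀ v (Finset.mem_univ v))
        exact abs_le.1 h1
      have hBle : ∀ u, T.pathSum β u ≤ 0 := by
        intro u
        have hxK : (fun v => if v ∈ T.anc u then (1:ℝ) else 0) ∈ K := T.indicator_feasible u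
        have h1 := hfK _ hxK
        rw [hrepr] at h1
        have h2 : (∑ v, (if v ∈ T.anc u then (1:ℝ) else 0) * β₀ v) = ∑ v ∈ T.anc u, β₀ v := by
          simp only [ite_mul, one_mul, zero_mul]
          rw [← Finset.sum_filter, Finset.filter_mem_eq_inter, Finset.univ_inter]
        rw [h2] at h1
        have h3 : T.pathSum β u = (∑ v ∈ T.anc u, β₀ v) / M := by
          rw [SBHTree.pathSum, Finset.sum_div]
        rw [h3]
        exact div_nonpos_of_nonpos_of_nonneg h1 hMnn
      obtain ⟨α, hα⟩ := T.dual_of_pathSum β hβ1 hBle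
      refine ⟨∑ v, a v * β v, ⟨α, β, hα, rfl⟩, ?_⟩
      have hval : (∑ v, a v * β v) = (f a) / M := by
        rw [hrepr a, Finset.sum_div]
        apply Finset.sum_congr rfl
        intro v _
        rw [mul_div_assoc]
      rw [hval, le_div_iff₀ hMpos]
      have := hbound v₀
      linarith [mul_comm P M]
  refine le_antisymm ?_ ?_
  · obtain ⟨d, hd, hPd⟩ := hstrong
    exact hPd.trans (le_csSup hbddD hd)
  · exact csSup_le hDne fun d hd => le_csInf hSne fun c hc => hweakSD d hd c hc
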